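/- Let n ≥ 1, let λ ∈ Z_{≥0}^n be a composition and let d ≥ 1. Call a pair of sequences (c₁ < c₂ < … < c_d of positive integers; j₁,…,j_d ∈ {1,…,n}) AQ-admissible for (λ,d) if, setting μ^{(0)} = λ and μ^{(a)} = μ^{(a−1)} + 1_{j_a} (the composition obtained by increasing the j_a-th entry by 1), one has for every a = 1,…,d: c_a − 1 ∈ {λ₁,…,λ_n} ∪ {c_{a−1}} (for a = 1 just c₁ − 1 ∈ {λ₁,…,λ_n}), there exists an index j with μ^{(a−1)}_j = c_a − 1, and j_a is the largest such index. Then a composition μ ∈ Z_{≥0}^n is equal to μ^{(d)} for some AQ-admissible pair if and only if μ ∈ Ser^n_{d,λ}; moreover each μ ∈ Ser^n_{d,λ} arises from exactly one AQ-admissible pair. -/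

import Mathlib

/-- The set `Ser^n_{d,λ}` of `d`-serpentines associated with a composition
`λ ∈ Z_{≥0}^n` (Definition 1.1, 0-based indexing). -/
def SerpF {n : ℕ} (d : ℕ) (lam mu : Fin n → ℕ) : Prop :=
  (∀ i, lam i ≤ mu i) ∧
  (∑ i, (mu i - lam i)) = d ∧
  (∀ i j : Fin n, i < j → lam i ≤ lam j → mu i ≤ lam j) ∧
  (∀ i j : Fin n, i < j → lam j < lam i → lam i ≤ mu j → mu i = lam i)

/-- `muUpTo lam J a` is the composition `μ⁽ᵃ⁾ = λ + 1_{j₁} + … + 1_{j_a}` obtained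
from `λ` after the first `a` steps of the process recorded by `J` (0-based: the
steps performed are those of index `b` with `b < a`). -/
def muUpTo {n d : ℕ} (lam : Fin n → ℕ) (J : Fin d → Fin n) (a : ℕ) (i : Fin n) : ℕ :=
  lam i + ((Finset.univ : Finset (Fin d)).filter (fun b : Fin d => b.val < a ∧ J b = i)).card

/-- An AQ-admissible pair for `(λ, d)`: a strictly increasing sequence of positive
integers `c₁ < … < c_d` together with indices `j₁, …, j_d` such that, setting
`μ⁽⁰⁾ = λ` and `μ⁽ᵃ⁾ = μ⁽ᵃ⁻¹⁾ + 1_{j_a}`, for every step `a` one has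
`c_a − 1 ∈ {λ₁,…,λ_n} ∪ {c_{a−1}}` (for the first step just `c₁ − 1 ∈ {λᵢ}`),
`μ⁽ᵃ⁻¹⁾_{j_a} = c_a − 1`, and `j_a` is the largest index with this property. -/
def AQAdmissible {n d : ℕ} (lam : Fin n → ℕ) (c : Fin d → ℕ) (J : Fin d → Fin n) : Prop :=
  (∀ a, 0 < c a) ∧ StrictMono c ∧
  ∀ a : Fin d,
    ((∃ i, lam i = c a - 1) ∨ ∃ b : Fin d, (b : ℕ) + 1 = (a : ℕ) ∧ c b = c a - 1) ∧
    muUpTo lam J (a : ℕ) (J a) = c a - 1 ∧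
    (∀ i, muUpTo lam J (a : ℕ) i = c a - 1 → i ≤ J a)

open Finset

section Helpers
variable {n d : ℕ} (lam : Fin n → ℕ) (J : Fin d → Fin n)

lemma muUpTo_lam_le (a : ℕ) (i : Fin n) : lam i ≤ muUpTo lam J a i :=
  Nat.le_add_right _ _

lemma muUpTo_zero (i : Fin n) : muUpTo lam J 0 i = lam i := by
  unfold muUpTo
  rw [Finset.filter_false_of_mem (by intro b _ hb; exact absurd hb.1 (Nat.not_lt_zero _))]
  simp

lemma muUpTo_mono {a a' : ℕ} (h : a ≤ a') (i : Fin n) :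
    muUpTo lam J a i ≤ muUpTo lam J a' i := by
  unfold muUpTo
  refine Nat.add_le_add_left (Finset.card_le_card ?_) _
  intro b hb
  simp only [Finset.mem_filter] at hb ⊢
  exact ⟨hb.1, lt_of_lt_of_le hb.2.1 h, hb.2.2⟩

lemma muUpTo_succ_of_eq (a : Fin d) (i : Fin n) (h : J a = i) :
    muUpTo lam J (a.val + 1) i = muUpTo lam J a.val i + 1 := by
  unfold muUpTo
  rw [add_assoc]
  congr 1
  have hset : (Finset.univ.filter (fun b : Fin d => b.val < a.val + 1 ∧ J b = i)) =
      insert a (Finset.univ.filter (fun b : Fin d => b.val < a.val ∧ J b = i)) := by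
    ext b
    simp only [Finset.mem_filter, Finset.mem_insert, Finset.mem_univ, true_and]
    constructor
    · rintro ⟨hb1, hb2⟩
      rcases Nat.lt_succ_iff_lt_or_eq.mp hb1 with h' | h'
      · exact Or.inr ⟨h', hb2⟩
      · exact Or.inl (Fin.ext h')
    · rintro (rfl | ⟨hb1, hb2⟩)
      · exact ⟨Nat.lt_succ_self _, h⟩
      · exact ⟨Nat.lt_succ_of_lt hb1, hb2⟩
  rw [hset, Finset.card_insert_of_notMem (by simp)]

lemma muUpTo_succ_of_ne (a : Fin d) (i : Fin n) (h : J a ≠ i) :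
    muUpTo lam J (a.val + 1) i = muUpTo lam J a.val i := by
  unfold muUpTo
  congr 2
  apply Finset.filter_congr
  intro b _
  constructor
  · rintro ⟨hb1, hb2⟩
    refine ⟨?_, hb2⟩
    rcases Nat.lt_succ_iff_lt_or_eq.mp hb1 with h' | h'
    · exact h'
    · exact absurd hb2 (Fin.ext h' ▸ h)
  · rintro ⟨hb1, hb2⟩
    exact ⟨Nat.lt_succ_of_lt hb1, hb2⟩

lemma muUpTo_first_hit (a : Fin d) (i : Fin n)
    (h : ∀ b : Fin d, b.val < a.val → J b ≠ i) :
    muUpTo lam J a.val i = lam i := by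
  unfold muUpTo
  rw [Finset.filter_false_of_mem (by rintro b _ ⟨hb1, hb2⟩; exact h b hb1 hb2)]
  simp

lemma exists_step (i : Fin n) (v : ℕ) (h1 : lam i ≤ v) (h2 : v < muUpTo lam J d i) :
    ∃ a : Fin d, J a = i ∧ muUpTo lam J a.val i = v := by
  set f : ℕ → ℕ := fun k => muUpTo lam J k i with hf
  set k := Nat.findGreatest (fun k => f k ≤ v) d with hk
  have hk0 : f 0 ≤ v := by simpa [hf, muUpTo_zero] using h1
  have hkspec : f k ≤ v := Nat.findGreatest_spec (P := fun k => f k ≤ v) (Nat.zero_le d) hk0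
  have hkd : k ≤ d := Nat.findGreatest_le d
  have hklt : k < d := by
    rcases lt_or_eq_of_le hkd with h | h
    · exact h
    · exfalso; rw [h] at hkspec; exact absurd h2 (not_lt.mpr hkspec)
  have hnot : ¬ f (k + 1) ≤ v :=
    Nat.findGreatest_is_greatest (P := fun k => f k ≤ v) (Nat.lt_succ_self k) hklt
  set a : Fin d := ⟨k, hklt⟩ with ha
  by_cases hJ : J a = i
  · have hs := muUpTo_succ_of_eq lam J a i hJ
    refine ⟨a, hJ, ?_⟩
    show muUpTo lam J k i = v
    have h1' : f (k + 1) = muUpTo lam J k i + 1 := hs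
    have h2' : f k = muUpTo lam J k i := rfl
    omega
  · have hs := muUpTo_succ_of_ne lam J a i hJ
    exfalso
    have h1' : f (k+1) = f k := hs
    omega

end Helpers

section DirB
variable {n d : ℕ}

lemma serp_of_adm (lam : Fin n → ℕ) (c : Fin d → ℕ) (J : Fin d → Fin n)
    (h : AQAdmissible lam c J) : SerpF d lam (muUpTo lam J d) := by
  obtain ⟨hpos, hmono, hstep⟩ := h
  refine ⟨fun i => muUpTo_lam_le lam J d i, ?_, ?_, ?_⟩
  · -- sum condition
    have hi : ∀ i, muUpTo lam J d i - lam i =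
        (Finset.univ.filter (fun b : Fin d => J b = i)).card := by
      intro i
      unfold muUpTo
      rw [Finset.filter_congr (fun b _ => by
        constructor
        · rintro ⟨_, h2⟩; exact h2
        · intro h2; exact ⟨b.isLt, h2⟩)]
      omega
    calc ∑ i, (muUpTo lam J d i - lam i)
        = ∑ i, (Finset.univ.filter (fun b : Fin d => J b = i)).card := by
          exact Finset.sum_congr rfl (fun i _ => hi i)
      _ = (Finset.univ : Finset (Fin d)).card :=
          (Finset.card_eq_sum_card_fiberwise (fun x _ => Finset.mem_univ (J x))).symm
      _ = d := by simp
  · -- condition (iii)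
    intro i j hij hlam
    by_contra hgt
    push_neg at hgt
    obtain ⟨a, hJa, hva⟩ := exists_step lam J i (lam j) hlam hgt
    have hca : c a = lam j + 1 := by
      have h3 := (hstep a).2.1
      rw [hJa, hva] at h3
      have := hpos a
      omega
    have hvj : muUpTo lam J a.val j = lam j := by
      by_contra hne
      have hpos' : 0 < (Finset.univ.filter
          (fun b : Fin d => b.val < a.val ∧ J b = j)).card := by
        have := muUpTo_lam_le lam J a.val j
        unfold muUpTo at hne this
        omega
      obtain ⟨b0, hb0mem, hb0min⟩ := Finset.exists_min_image _ (fun b : Fin d => b.val)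
        (Finset.card_pos.mp hpos')
      simp only [Finset.mem_filter, Finset.mem_univ, true_and] at hb0mem
      have hfh : muUpTo lam J b0.val j = lam j := by
        apply muUpTo_first_hit
        intro b hb hJb
        have : b0.val ≤ b.val := hb0min b (by
          simp only [Finset.mem_filter, Finset.mem_univ, true_and]
          exact ⟨lt_trans hb hb0mem.1, hJb⟩)
        omega
      have hcb0 : c b0 = lam j + 1 := by
        have h3 := (hstep b0).2.1
        rw [hb0mem.2, hfh] at h3
        have := hpos b0
        omega
      have : c b0 < c a := hmono (by exact hb0mem.1)
      omega
    have hle' := (hstep a).2.2 j (by rw [hvj]; omega)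
    rw [hJa] at hle'
    exact absurd hle' (not_le.mpr hij)
  · -- condition (iv)
    intro i j hij hlt hle
    by_contra hne
    have hlt' : lam i < muUpTo lam J d i :=
      lt_of_le_of_ne (muUpTo_lam_le lam J d i) (Ne.symm hne)
    obtain ⟨a, hJa, hva⟩ := exists_step lam J j (lam i - 1) (by omega) (by omega)
    have hca : c a = lam i := by
      have h3 := (hstep a).2.1
      rw [hJa, hva] at h3
      have := hpos a
      omega
    obtain ⟨s, hJs, hvs⟩ := exists_step lam J i (lam i) le_rfl hlt'
    have hcs : c s = lam i + 1 := by
      have h3 := (hstep s).2.1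
      rw [hJs, hvs] at h3
      have := hpos s
      omega
    have has : a < s := by
      by_contra hns
      push_neg at hns
      have : c s ≤ c a := hmono.monotone hns
      omega
    rcases lt_or_eq_of_le hle with hlt2 | heq2
    · obtain ⟨a', hJa', hva'⟩ := exists_step lam J j (lam i) (le_of_lt hlt) hlt2
      have hca' : c a' = lam i + 1 := by
        have h3 := (hstep a').2.1
        rw [hJa', hva'] at h3
        have := hpos a'
        omega
      have : a' = s := hmono.injective (by omega)
      rw [this, hJs] at hJa'
      exact absurd hJa' (ne_of_lt hij)
    · have h1 : muUpTo lam J s.val j ≤ lam i := by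
        have := muUpTo_mono lam J (le_of_lt s.isLt) j
        omega
      have h2 : lam i ≤ muUpTo lam J s.val j := by
        have hsucc := muUpTo_succ_of_eq lam J a j hJa
        have hmono' := muUpTo_mono lam J (show a.val + 1 ≤ s.val from has) j
        omega
      have hle'' := (hstep s).2.2 j (by omega)
      rw [hJs] at hle''
      exact absurd hle'' (not_le.mpr hij)

end DirB

section DirA
variable {n d : ℕ}

lemma serp_pair_false (lam mu : Fin n → ℕ) (hs : SerpF d lam mu) :
    ∀ i j : Fin n, i < j → ∀ v : ℕ, lam i < v → v ≤ mu i → lam j < v → v ≤ mu j → False := by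
  obtain ⟨hle, _, h3, h4⟩ := hs
  intro i j hij v h1 h2 h3' h4'
  rcases le_or_gt (lam i) (lam j) with h | h
  · have := h3 i j hij h; omega
  · have := h4 i j hij h (by omega); omega

lemma serp_disj (lam mu : Fin n → ℕ) (hs : SerpF d lam mu) :
    ∀ i j : Fin n, i ≠ j → ∀ v : ℕ,
      v ∈ Finset.Ioc (lam i) (mu i) → v ∈ Finset.Ioc (lam j) (mu j) → False := by
  intro i j hne v hv1 hv2
  rw [Finset.mem_Ioc] at hv1 hv2
  rcases lt_or_gt_of_ne hne with h | h
  · exact serp_pair_false lam mu hs i j h v hv1.1 hv1.2 hv2.1 hv2.2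
  · exact serp_pair_false lam mu hs j i h v hv2.1 hv2.2 hv1.1 hv1.2

lemma serp_KC (lam mu : Fin n → ℕ) (hs : SerpF d lam mu) (i j : Fin n) (hij : i < j)
    (v : ℕ) (h1 : lam i < v) (h2 : v ≤ mu i) (h3 : mu j = v - 1) : False := by
  obtain ⟨hle, _, hc3, hc4⟩ := hs
  rcases le_or_gt (lam i) (lam j) with h | h
  · have := hc3 i j hij h
    have := hle j
    omega
  · have := hc4 i j hij h (by omega)
    omega

lemma serp_card (lam mu : Fin n → ℕ) (hs : SerpF d lam mu) :
    (Finset.univ.biUnion (fun i => Finset.Ioc (lam i) (mu i))).card = d := by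
  rw [Finset.card_biUnion (by
    intro i _ j _ hne
    rw [Function.onFun, Finset.disjoint_left]
    intro v hv1 hv2
    exact serp_disj lam mu hs i j hne v hv1 hv2)]
  simp only [Nat.card_Ioc]
  exact hs.2.1

lemma adm_mem_Ioc (lam : Fin n → ℕ) (c : Fin d → ℕ) (J : Fin d → Fin n)
    (h : AQAdmissible lam c J) (a : Fin d) :
    c a ∈ Finset.Ioc (lam (J a)) (muUpTo lam J d (J a)) := by
  obtain ⟨hpos, hmono, hstep⟩ := h
  rw [Finset.mem_Ioc]
  constructor
  · have h1 := (hstep a).2.1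
    have h2 := muUpTo_lam_le lam J a.val (J a)
    have := hpos a
    omega
  · have h1 : muUpTo lam J (a.val + 1) (J a) = c a := by
      rw [muUpTo_succ_of_eq lam J a _ rfl, (hstep a).2.1]
      have := hpos a; omega
    have h2 := muUpTo_mono lam J (show a.val + 1 ≤ d from a.isLt) (J a)
    omega

lemma adm_of_serp (lam mu : Fin n → ℕ) (hs : SerpF d lam mu) :
    ∃ (c : Fin d → ℕ) (J : Fin d → Fin n),
      AQAdmissible lam c J ∧ mu = muUpTo lam J d := by
  classical
  set S : Finset ℕ := Finset.univ.biUnion (fun i => Finset.Ioc (lam i) (mu i)) with hS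
  have hcard : S.card = d := serp_card lam mu hs
  set c : Fin d → ℕ := fun a => S.orderEmbOfFin hcard a with hc
  have hcmem : ∀ a, c a ∈ S := fun a => S.orderEmbOfFin_mem hcard a
  have hcmono : StrictMono c := (S.orderEmbOfFin hcard).strictMono
  have hex : ∀ a : Fin d, ∃ i : Fin n, c a ∈ Finset.Ioc (lam i) (mu i) := by
    intro a
    obtain ⟨i, _, hi⟩ := Finset.mem_biUnion.mp (hcmem a)
    exact ⟨i, hi⟩
  set J : Fin d → Fin n := fun a => (hex a).choose with hJdef
  have hJ : ∀ a, c a ∈ Finset.Ioc (lam (J a)) (mu (J a)) := fun a => (hex a).choose_spec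
  have hJu : ∀ a i, c a ∈ Finset.Ioc (lam i) (mu i) → J a = i := by
    intro a i hi
    by_contra hne
    exact serp_disj lam mu hs _ _ hne _ (hJ a) hi
  have himg : Finset.image c Finset.univ = S := by
    apply Finset.eq_of_subset_of_card_le
    · intro x hx
      obtain ⟨a, _, rfl⟩ := Finset.mem_image.mp hx
      exact hcmem a
    · rw [Finset.card_image_of_injective _ hcmono.injective]
      simp [hcard]
  have hsurj : ∀ v ∈ S, ∃ a : Fin d, c a = v := by
    intro v hv
    rw [← himg] at hv
    obtain ⟨a, _, ha⟩ := Finset.mem_image.mp hv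
    exact ⟨a, ha⟩
  have hcnt : ∀ (p : ℕ → Prop) (_ : DecidablePred p),
      (Finset.univ.filter (fun b : Fin d => p (c b))).card = (S.filter p).card := by
    intro p _
    have h1 : S.filter p = (Finset.univ.filter (fun b : Fin d => p (c b))).image c := by
      rw [← himg, Finset.filter_image]
    rw [h1, Finset.card_image_of_injective _ hcmono.injective]
  have hval : ∀ (a : Fin d) (i : Fin n),
      muUpTo lam J a.val i = lam i + (min (mu i) (c a - 1) - lam i) := by
    intro a i
    unfold muUpTo
    congr 1
    have e1 : Finset.univ.filter (fun b : Fin d => b.val < a.val ∧ J b = i)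
        = Finset.univ.filter
            (fun b : Fin d => c b < c a ∧ c b ∈ Finset.Ioc (lam i) (mu i)) := by
      apply Finset.filter_congr
      intro b _
      constructor
      · rintro ⟨hb1, rfl⟩
        exact ⟨hcmono (Fin.lt_def.mpr hb1), hJ b⟩
      · rintro ⟨hb1, hb2⟩
        exact ⟨Fin.lt_def.mp (hcmono.lt_iff_lt.mp hb1), hJu b i hb2⟩
    rw [e1, hcnt (fun x => x < c a ∧ x ∈ Finset.Ioc (lam i) (mu i)) inferInstance]
    have e2 : S.filter (fun x => x < c a ∧ x ∈ Finset.Ioc (lam i) (mu i))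
        = Finset.Ioc (lam i) (min (mu i) (c a - 1)) := by
      ext x
      simp only [hS, Finset.mem_filter, Finset.mem_Ioc, Finset.mem_biUnion,
        Finset.mem_univ, true_and]
      constructor
      · rintro ⟨-, hx1, hx2, hx3⟩
        omega
      · rintro ⟨hx1, hx2⟩
        exact ⟨⟨i, by omega, by omega⟩, by omega, by omega, by omega⟩
    rw [e2, Nat.card_Ioc]
  have hvald : ∀ i, muUpTo lam J d i = mu i := by
    intro i
    unfold muUpTo
    have e1 : Finset.univ.filter (fun b : Fin d => b.val < d ∧ J b = i)
        = Finset.univ.filter (fun b : Fin d => c b ∈ Finset.Ioc (lam i) (mu i)) := by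
      apply Finset.filter_congr
      intro b _
      constructor
      · rintro ⟨-, rfl⟩
        exact hJ b
      · intro hb
        exact ⟨b.isLt, hJu b i hb⟩
    rw [e1, hcnt (fun x => x ∈ Finset.Ioc (lam i) (mu i)) inferInstance]
    have e2 : S.filter (fun x => x ∈ Finset.Ioc (lam i) (mu i))
        = Finset.Ioc (lam i) (mu i) := by
      ext x
      constructor
      · intro hx
        exact (Finset.mem_filter.mp hx).2
      · intro hx
        exact Finset.mem_filter.mpr
          ⟨Finset.mem_biUnion.mpr ⟨i, Finset.mem_univ _, hx⟩, hx⟩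
    rw [e2, Nat.card_Ioc]
    have := hs.1 i
    omega
  refine ⟨c, J, ⟨?_, hcmono, ?_⟩, funext fun i => (hvald i).symm⟩
  · intro a
    have := hJ a
    rw [Finset.mem_Ioc] at this
    omega
  · intro a
    have hia := hJ a
    rw [Finset.mem_Ioc] at hia
    refine ⟨?_, ?_, ?_⟩
    · by_cases hcl : lam (J a) = c a - 1
      · exact Or.inl ⟨J a, hcl⟩
      · right
        have hmem : c a - 1 ∈ S := by
          rw [hS]
          exact Finset.mem_biUnion.mpr
            ⟨J a, Finset.mem_univ _, Finset.mem_Ioc.mpr ⟨by omega, by omega⟩⟩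
        obtain ⟨b, hb⟩ := hsurj _ hmem
        have hba : b < a := hcmono.lt_iff_lt.mp (by omega)
        refine ⟨b, ?_, hb⟩
        by_contra hne
        have hb1 : b.val + 1 < a.val := by
          have := Fin.lt_def.mp hba; omega
        have hlt1 : c b < c ⟨b.val + 1, lt_trans hb1 a.isLt⟩ :=
          hcmono (by simp [Fin.lt_def])
        have hlt2 : c ⟨b.val + 1, lt_trans hb1 a.isLt⟩ < c a :=
          hcmono (by simpa [Fin.lt_def] using hb1)
        omega
    · rw [hval a (J a)]
      omega
    · intro i' hv
      by_cases hii : i' = J a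
      · exact le_of_eq hii
      rw [hval a i'] at hv
      have hmem' : ¬ (lam i' < c a ∧ c a ≤ mu i') := by
        intro hin
        exact hii (hJu a i' (Finset.mem_Ioc.mpr hin)).symm
      have hlei' := hs.1 i'
      rcases le_or_gt (c a) (lam i') with hA | hA
      · exfalso; omega
      rcases le_or_gt (c a) (mu i') with hB | hB
      · exact absurd ⟨hA, hB⟩ hmem'
      have hmui' : mu i' = c a - 1 := by omega
      refine le_of_not_gt (fun hgt => ?_)
      exact serp_KC lam mu hs (J a) i' hgt (c a) hia.1 hia.2 hmui'

lemma adm_eq (lam mu : Fin n → ℕ) (hs : SerpF d lam mu)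
    {c c' : Fin d → ℕ} {J J' : Fin d → Fin n}
    (h : AQAdmissible lam c J) (hm : mu = muUpTo lam J d)
    (h' : AQAdmissible lam c' J') (hm' : mu = muUpTo lam J' d) :
    c = c' ∧ J = J' := by
  classical
  have hcard : (Finset.univ.biUnion (fun i => Finset.Ioc (lam i) (mu i))).card = d :=
    serp_card lam mu hs
  have key : ∀ a, c a ∈ Finset.Ioc (lam (J a)) (mu (J a)) := by
    intro a
    have := adm_mem_Ioc lam c J h a
    rwa [← hm] at this
  have key' : ∀ a, c' a ∈ Finset.Ioc (lam (J' a)) (mu (J' a)) := by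
    intro a
    have := adm_mem_Ioc lam c' J' h' a
    rwa [← hm'] at this
  have hceq : c = ⇑((Finset.univ.biUnion
      (fun i => Finset.Ioc (lam i) (mu i))).orderEmbOfFin hcard) :=
    Finset.orderEmbOfFin_unique hcard
      (fun a => Finset.mem_biUnion.mpr ⟨J a, Finset.mem_univ _, key a⟩) h.2.1
  have hceq' : c' = ⇑((Finset.univ.biUnion
      (fun i => Finset.Ioc (lam i) (mu i))).orderEmbOfFin hcard) :=
    Finset.orderEmbOfFin_unique hcard
      (fun a => Finset.mem_biUnion.mpr ⟨J' a, Finset.mem_univ _, key' a⟩) h'.2.1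
  have hcc : c = c' := hceq.trans hceq'.symm
  refine ⟨hcc, funext fun a => ?_⟩
  by_contra hne
  have hk' := key' a
  rw [← hcc] at hk'
  exact serp_disj lam mu hs _ _ hne (c a) (key a) hk'

end DirA


/-- Proposition 1.2.  A composition `μ` equals `μ⁽ᵈ⁾` for some
AQ-admissible pair if and only if `μ ∈ Ser^n_{d,λ}`; moreover each serpentine
arises from exactly one AQ-admissible pair. -/
theorem AQ_pairs_are_serpentines {n d : ℕ} (hn : 1 ≤ n) (hd : 1 ≤ d)
    (lam mu : Fin n → ℕ) :
    ((∃ (c : Fin d → ℕ) (J : Fin d → Fin n),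
        AQAdmissible lam c J ∧ mu = muUpTo lam J d) ↔ SerpF d lam mu) ∧
    (SerpF d lam mu →
      ∃! p : (Fin d → ℕ) × (Fin d → Fin n),
        AQAdmissible lam p.1 p.2 ∧ mu = muUpTo lam p.2 d) := by
  constructor
  · constructor
    · rintro ⟨c, J, hadm, rfl⟩
      exact serp_of_adm lam c J hadm
    · intro hs
      exact adm_of_serp lam mu hs
  · intro hs
    obtain ⟨c, J, hadm, hmu⟩ := adm_of_serp lam mu hs
    refine ⟨(c, J), ⟨hadm, hmu⟩, ?_⟩
    rintro ⟨c', J'⟩ ⟨hadm', hmu'⟩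
    obtain ⟨h1, h2⟩ := adm_eq lam mu hs hadm' hmu' hadm hmu
    exact Prod.ext h1 h2
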